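/- Let F be a closed subset of a metric space X. The collection of connected components of F is locally finite in X (every point of X has an open neighbourhood meeting only finitely many components) if and only if there exists a family of pairwise disjoint open subsets of X, one containing each component of F. -/

import Mathlib

open Set Topology

theorem locallyFinite_components_iff_disjoint_opens
    {X : Type*} [MetricSpace X] {F : Set X} (hF : IsClosed F) :
    LocallyFinite
        (fun c : {s : Set X // ∃ x ∈ F, s = connectedComponentIn F x} => (c : Set X)) ↔
      ∃ U : {s : Set X // ∃ x ∈ F, s = connectedComponentIn F x} → Set X,
        (∀ c, IsOpen (U c) ∧ (c : Set X) ⊆ U c) ∧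
        Pairwise (Function.onFun Disjoint U) := by
  constructor
  · intro hlf
    have hdisj : Pairwise (Function.onFun Disjoint
        (fun c : {s : Set X // ∃ x ∈ F, s = connectedComponentIn F x} => (c : Set X))) := by
      rintro ⟨c, x, hx, rfl⟩ ⟨c', x', hx', rfl⟩ hne
      simp only [Function.onFun]
      rw [Set.disjoint_left]
      intro a ha ha'
      apply hne
      ext1
      simp only
      rw [connectedComponentIn_eq ha, connectedComponentIn_eq ha']
    have hclosed : ∀ c : {s : Set X // ∃ x ∈ F, s = connectedComponentIn F x},
        IsClosed (c : Set X) := by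
      rintro ⟨c, x, hx, rfl⟩
      show IsClosed (connectedComponentIn F x)
      rw [connectedComponentIn_eq_image hx]
      exact hF.isClosedEmbedding_subtypeVal.isClosedMap _ isClosed_connectedComponent
    set rest : {s : Set X // ∃ x ∈ F, s = connectedComponentIn F x} → Set X :=
      fun c => ⋃ c' : {c' // c' ≠ c}, ((c' : _) : Set X) with hrest
    have hrest_closed : ∀ c, IsClosed (rest c) := by
      intro c
      apply LocallyFinite.isClosed_iUnion
      · exact hlf.comp_injective Subtype.val_injective
      · intro c'; exact hclosed _
    refine ⟨fun c => {x | EMetric.infEdist x (c : Set X) < EMetric.infEdist x (rest c)},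
      ?_, ?_⟩
    · intro c
      constructor
      · exact isOpen_lt EMetric.continuous_infEdist EMetric.continuous_infEdist
      · intro a ha
        simp only [mem_setOf_eq]
        rw [show EMetric.infEdist a (c : Set X) = 0 from EMetric.infEdist_zero_of_mem ha, pos_iff_ne_zero]
        intro h0
        have hcl : a ∈ closure (rest c) := EMetric.mem_closure_iff_infEdist_zero.2 h0
        rw [(hrest_closed c).closure_eq] at hcl
        obtain ⟨c', hc'⟩ := mem_iUnion.1 hcl
        exact Set.disjoint_left.1 (hdisj c'.2) hc' ha
    · intro c c' hne
      simp only [Function.onFun]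
      rw [Set.disjoint_left]
      intro a ha ha'
      simp only [mem_setOf_eq] at ha ha'
      have h1 : EMetric.infEdist a (rest c) ≤ EMetric.infEdist a (c' : Set X) :=
        EMetric.infEdist_anti
          (subset_iUnion (fun c'' : {c'' // c'' ≠ c} => ((c'' : _) : Set X)) ⟨c', hne.symm⟩)
      have h2 : EMetric.infEdist a (rest c') ≤ EMetric.infEdist a (c : Set X) :=
        EMetric.infEdist_anti
          (subset_iUnion (fun c'' : {c'' // c'' ≠ c'} => ((c'' : _) : Set X)) ⟨c, hne⟩)
      exact absurd (lt_trans (lt_of_lt_of_le ha h1) (lt_of_lt_of_le ha' h2)) (lt_irrefl _)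
  · rintro ⟨U, hU, hdisj⟩
    intro x
    by_cases hx : x ∈ F
    · set c₀ : {s : Set X // ∃ x ∈ F, s = connectedComponentIn F x} :=
        ⟨connectedComponentIn F x, x, hx, rfl⟩
      have hxc : x ∈ (c₀ : Set X) := mem_connectedComponentIn hx
      refine ⟨U c₀, (hU c₀).1.mem_nhds ((hU c₀).2 hxc), ?_⟩
      apply Set.Finite.subset (Set.finite_singleton c₀)
      intro c hc
      obtain ⟨y, hy1, hy2⟩ := hc
      by_contra hne
      exact Set.disjoint_left.1 (hdisj hne) ((hU c).2 hy1) hy2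
    · refine ⟨Fᶜ, hF.isOpen_compl.mem_nhds hx, ?_⟩
      apply Set.Finite.subset Set.finite_empty
      rintro ⟨c, y, hy, rfl⟩ ⟨z, hz1, hz2⟩
      exact hz2 (connectedComponentIn_subset F y hz1)
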